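/- Let (Γ, T, n⊥, n, κ_g, τ_g) be a closed asymptotic curve in ℝ³ and u a unit vector with ⟨u, n(t)⟩ ≠ 0 for all t. Define h(t) := ⟨Γ(t), n(t)⟩ / ⟨u, n(t)⟩ (the height of the tangent plane along the curve, when the surface is a graph in direction u). Then h is differentiable and for all t: h′(t)·⟨u, n(t)⟩² = τ_g(t)·(⟨Γ(t), n(t)⟩⟨u, n⊥(t)⟩ − ⟨Γ(t), n⊥(t)⟩⟨u, n(t)⟩), and this quantity equals τ_g(t)·⟨Γ(t), T(t) × u⟩. (Petrunin's identity, Note 3.1; the sign convention is fixed by n⊥ = n × T.) -/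

import Mathlib

open Real intervalIntegral

noncomputable section

/-- The cross product on `EuclideanSpace ℝ (Fin 3)`. -/
def cross3 (a b : EuclideanSpace ℝ (Fin 3)) : EuclideanSpace ℝ (Fin 3) :=
  (EuclideanSpace.equiv (Fin 3) ℝ).symm
    (crossProduct ((EuclideanSpace.equiv (Fin 3) ℝ) a) ((EuclideanSpace.equiv (Fin 3) ℝ) b))

lemma cross3_apply' (a b : EuclideanSpace ℝ (Fin 3)) (i : Fin 3) :
    cross3 a b i = ![a 1 * b 2 - a 2 * b 1, a 2 * b 0 - a 0 * b 2, a 0 * b 1 - a 1 * b 0] i := by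
  have := cross_apply (R := ℝ) ((EuclideanSpace.equiv (Fin 3) ℝ) a)
    ((EuclideanSpace.equiv (Fin 3) ℝ) b)
  fin_cases i <;> simp [cross3, this]

lemma key3 (g u m T : EuclideanSpace ℝ (Fin 3)) (h1 : (inner ℝ m T : ℝ) = 0) (h2 : ‖m‖ = 1) :
    (inner ℝ g m : ℝ) * (inner ℝ u (cross3 m T) : ℝ) - (inner ℝ g (cross3 m T) : ℝ) * (inner ℝ u m : ℝ)
      = (inner ℝ g (cross3 T u) : ℝ) := by
  have h2' : (inner ℝ m m : ℝ) = 1 := by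
    rw [real_inner_self_eq_norm_mul_norm, h2]; ring
  simp only [PiLp.inner_apply, RCLike.inner_apply, conj_trivial, Fin.sum_univ_three,
    cross3_apply'] at *
  simp only [Matrix.cons_val_zero, Matrix.cons_val_one, Matrix.head_cons,
    Matrix.cons_val_two, Matrix.tail_cons] at *
  linear_combination (g 0 * (u 1 * m 2 - u 2 * m 1) + g 1 * (u 2 * m 0 - u 0 * m 2)
      + g 2 * (u 0 * m 1 - u 1 * m 0)) * h1
    + (g 0 * (T 1 * u 2 - T 2 * u 1) + g 1 * (T 2 * u 0 - T 0 * u 2)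
      + g 2 * (T 0 * u 1 - T 1 * u 0)) * h2'

/-- Petrunin's identity (Note 3.1): the height `h = ⟨Γ, n⟩/⟨u, n⟩` of the tangent planes
satisfies `h′·⟨u,n⟩² = τ_g·(⟨Γ,n⟩⟨u,n⊥⟩ − ⟨Γ,n⊥⟩⟨u,n⟩) = τ_g·⟨Γ, T × u⟩`. -/
theorem stmt3
    (Γ n : ℝ → EuclideanSpace ℝ (Fin 3)) (κg τg : ℝ → ℝ)
    (hΓ : ContDiff ℝ 2 Γ) (hΓper : Function.Periodic Γ (2 * π))
    (hT1 : ∀ t, ‖deriv Γ t‖ = 1)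
    (hn : ContDiff ℝ 1 n) (hnper : Function.Periodic n (2 * π))
    (hn1 : ∀ t, ‖n t‖ = 1)
    (hnT : ∀ t, (inner ℝ (n t) (deriv Γ t) : ℝ) = 0)
    (hκcont : Continuous κg) (hκper : Function.Periodic κg (2 * π))
    (hτcont : Continuous τg) (hτper : Function.Periodic τg (2 * π))
    (hτ : ∀ t, τg t ≠ 0)
    (hDarboux1 : ∀ t, deriv (deriv Γ) t = κg t • cross3 (n t) (deriv Γ t))
    (hDarboux2 : ∀ t, deriv (fun s => cross3 (n s) (deriv Γ s)) t
      = -κg t • deriv Γ t + τg t • n t)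
    (hDarboux3 : ∀ t, deriv n t = -τg t • cross3 (n t) (deriv Γ t))
    (u : EuclideanSpace ℝ (Fin 3)) (hu : ‖u‖ = 1)
    (hun : ∀ t, (inner ℝ u (n t) : ℝ) ≠ 0) :
    ∀ t : ℝ,
      DifferentiableAt ℝ (fun s => (inner ℝ (Γ s) (n s) : ℝ) / (inner ℝ u (n s) : ℝ)) t ∧
      deriv (fun s => (inner ℝ (Γ s) (n s) : ℝ) / (inner ℝ u (n s) : ℝ)) t
          * (inner ℝ u (n t) : ℝ) ^ 2
        = τg t * ((inner ℝ (Γ t) (n t) : ℝ) * (inner ℝ u (cross3 (n t) (deriv Γ t)) : ℝ)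
            - (inner ℝ (Γ t) (cross3 (n t) (deriv Γ t)) : ℝ) * (inner ℝ u (n t) : ℝ)) ∧
      τg t * ((inner ℝ (Γ t) (n t) : ℝ) * (inner ℝ u (cross3 (n t) (deriv Γ t)) : ℝ)
            - (inner ℝ (Γ t) (cross3 (n t) (deriv Γ t)) : ℝ) * (inner ℝ u (n t) : ℝ))
        = τg t * (inner ℝ (Γ t) (cross3 (deriv Γ t) u) : ℝ) := by
  intro t
  have hΓd : Differentiable ℝ Γ := hΓ.differentiable (by norm_num)
  have hnd : Differentiable ℝ n := hn.differentiable one_ne_zero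
  have hf : DifferentiableAt ℝ (fun s => (inner ℝ (Γ s) (n s) : ℝ)) t :=
    (hΓd t).inner ℝ (hnd t)
  have hg : DifferentiableAt ℝ (fun s => (inner ℝ u (n s) : ℝ)) t :=
    (differentiableAt_const u).inner ℝ (hnd t)
  have hdiv : DifferentiableAt ℝ
      (fun s => (inner ℝ (Γ s) (n s) : ℝ) / (inner ℝ u (n s) : ℝ)) t :=
    hf.div hg (hun t)
  refine ⟨hdiv, ?_, ?_⟩
  · have hf' : deriv (fun s => (inner ℝ (Γ s) (n s) : ℝ)) t
        = -τg t * (inner ℝ (Γ t) (cross3 (n t) (deriv Γ t)) : ℝ) := by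
      have hnT' : (inner ℝ (deriv Γ t) (n t) : ℝ) = 0 := by
        rw [real_inner_comm]; exact hnT t
      rw [deriv_inner_apply ℝ (hΓd t) (hnd t), hDarboux3 t, real_inner_smul_right, hnT']
      ring
    have hg' : deriv (fun s => (inner ℝ u (n s) : ℝ)) t
        = -τg t * (inner ℝ u (cross3 (n t) (deriv Γ t)) : ℝ) := by
      rw [deriv_inner_apply ℝ (differentiableAt_const u) (hnd t), hDarboux3 t,
        real_inner_smul_right, deriv_const]
      simp
    rw [deriv_fun_div hf hg (hun t), hf', hg',
      div_mul_cancel₀ _ (pow_ne_zero 2 (hun t))]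
    ring
  · rw [key3 (Γ t) u (n t) (deriv Γ t) (hnT t) (hn1 t)]
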